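/- For any graph G and any m ≥ 1, there is a graph homomorphism from M_m(G) to H if and only if there is a walk of length m in the exponential graph H^G from a looped vertex (a homomorphism G → H) to a constant map. -/

import Mathlib

/-- Adjacency in the exponential graph `H^G`. -/
def expAdj {α β : Type*} (G : SimpleGraph α) (H : SimpleGraph β)
    (f g : α → β) : Prop :=
  ∀ u v, G.Adj u v → H.Adj (f u) (g v)

def cycleZMod (m : ℕ) : SimpleGraph (ZMod m) :=
  SimpleGraph.fromRel (fun i j => j = i + 1)

/-- The generalised Mycielskian (`n`-th cone) `M_n(G)`: the categorical product of `G`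
with the looped path `0,1,…,n` (loop at `0`), with all vertices at level `n`
identified to a single apex (`Sum.inr ()`). Levels `0,…,n-1` are `Sum.inl (u, i)`. -/
def Mycielskian {α : Type*} (G : SimpleGraph α) (n : ℕ) :
    SimpleGraph (α × Fin n ⊕ Unit) where
  Adj x y :=
    match x, y with
    | Sum.inl (u, i), Sum.inl (v, j) =>
        G.Adj u v ∧ ((i.val = 0 ∧ j.val = 0) ∨ i.val + 1 = j.val ∨ j.val + 1 = i.val)
    | Sum.inl (u, i), Sum.inr _ => i.val + 1 = n ∧ ∃ v, G.Adj u v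
    | Sum.inr _, Sum.inl (v, j) => j.val + 1 = n ∧ ∃ u, G.Adj v u
    | Sum.inr _, Sum.inr _ => False
  symm := by
    constructor
    rintro (⟨u, i⟩ | ⟨⟩) (⟨v, j⟩ | ⟨⟩) h
    · exact ⟨h.1.symm, by tauto⟩
    · exact h
    · exact h
    · exact h
  loopless := by
    constructor
    rintro (⟨u, i⟩ | ⟨⟩) h
    · exact G.irrefl h.1
    · exact h


theorem stmt11 {α β : Type*} (G : SimpleGraph α) (H : SimpleGraph β)
    (m : ℕ) (hm : 1 ≤ m) :
    Nonempty (Mycielskian G m →g H) ↔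
      ∃ w : ℕ → α → β, expAdj G H (w 0) (w 0) ∧
        (∀ k < m, expAdj G H (w k) (w (k + 1))) ∧ ∃ c, w m = fun _ => c := by
  constructor
  · rintro ⟨φ⟩
    refine ⟨fun k u => if h : k < m then φ (Sum.inl (u, ⟨k, h⟩)) else φ (Sum.inr ()),
      ?_, ?_, ⟨φ (Sum.inr ()), ?_⟩⟩
    · intro u v huv
      have h0 : 0 < m := hm
      simp only [dif_pos h0]
      exact φ.map_adj (show (Mycielskian G m).Adj (Sum.inl (u, ⟨0, h0⟩)) (Sum.inl (v, ⟨0, h0⟩))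
        from ⟨huv, Or.inl ⟨rfl, rfl⟩⟩)
    · intro k hk u v huv
      simp only [dif_pos hk]
      by_cases h1 : k + 1 < m
      · simp only [dif_pos h1]
        exact φ.map_adj (show (Mycielskian G m).Adj (Sum.inl (u, ⟨k, hk⟩)) (Sum.inl (v, ⟨k+1, h1⟩))
          from ⟨huv, Or.inr (Or.inl rfl)⟩)
      · simp only [dif_neg h1]
        have hkm : k + 1 = m := le_antisymm hk (not_lt.1 h1)
        exact φ.map_adj (show (Mycielskian G m).Adj (Sum.inl (u, ⟨k, hk⟩)) (Sum.inr ())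
          from ⟨hkm, v, huv⟩)
    · funext u; simp
  · rintro ⟨w, h0, hk, c, hc⟩
    refine ⟨⟨fun x => match x with
      | Sum.inl (u, i) => w i.1 u
      | Sum.inr _ => c, ?_⟩⟩
    rintro (⟨u, i⟩ | ⟨⟩) (⟨v, j⟩ | ⟨⟩) h
    · obtain ⟨huv, hij⟩ := h
      rcases hij with ⟨hi, hj⟩ | hij | hji
      · simp only [hi, hj]
        exact h0 u v huv
      · simp only [← hij]
        exact hk i.1 i.2 u v huv
      · simp only [← hji]
        exact (hk j.1 j.2 v u huv.symm).symm
    · obtain ⟨him, v, huv⟩ := h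
      have h2 := hk i.1 i.2 u v huv
      rw [him, hc] at h2
      exact h2
    · obtain ⟨hjm, u, huv⟩ := h
      have h2 := hk j.1 j.2 v u huv
      rw [hjm, hc] at h2
      exact h2.symm
    · exact h.elim
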